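/- Let n ≥ 2 and let g : ℝ^{n−1} × ℝ → ℝ be a polynomial function, written in variables (x, t) with x ∈ ℝ^{n−1} and t ∈ ℝ, such that g(0, 0) = 0 and (∂g/∂x_i)(0, 0) = 0 for i = 1, …, n−1. Suppose the univariate polynomial t ↦ g(0, t) has lowest-degree term c_0 t^d with c_0 ≠ 0 and d ≥ 1, i.e., g(0, t) = c_0 t^d + O(t^{d+1}) as t → 0. Let φ_1, …, φ_{n−1} : ℝ → ℝ be functions analytic at 0 with φ_i(0) = 0, write φ(t) = (φ_1(t), …, φ_{n−1}(t)), and suppose that for all t in a neighborhood of 0 and all i = 1, …, n−1: φ_i(t) + (∂g/∂x_i)(φ(t), t) · g(φ(t), t) = 0. Then φ_i(t) = O(t^{d+1}) as t → 0 for each i = 1, …, n−1. -/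

import Mathlib

open Filter Asymptotics MvPolynomial Finsupp

lemma pow_isBigO_pow_nhds_zero {N M : ℕ} (h : N ≤ M) :
    (fun t : ℝ => t ^ M) =O[nhds (0 : ℝ)] fun t => t ^ N := by
  have hrw : (fun t : ℝ => t ^ M) = fun t => t ^ N * t ^ (M - N) := by
    funext t; rw [← pow_add]; congr 1; omega
  rw [hrw]
  have h1 : (fun t : ℝ => t ^ (M - N)) =O[nhds (0 : ℝ)] (fun _ => (1 : ℝ)) :=
    ((continuous_pow (M - N)).tendsto 0).isBigO_one ℝ
  simpa using (isBigO_refl (fun t : ℝ => t ^ N) (nhds 0)).mul h1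

lemma isBigO_finset_prod {ι : Type*} (s : Finset ι) (f g : ι → ℝ → ℝ) (l : Filter ℝ)
    (h : ∀ i ∈ s, (f i) =O[l] (g i)) :
    (fun t => ∏ i ∈ s, f i t) =O[l] fun t => ∏ i ∈ s, g i t := by
  classical
  induction s using Finset.cons_induction with
  | empty => simpa using isBigO_refl (fun _ : ℝ => (1 : ℝ)) l
  | cons a s ha ih =>
    simp only [Finset.prod_cons]
    exact (h a (Finset.mem_cons_self a s)).mul (ih fun i hi => h i (Finset.mem_cons_of_mem hi))

lemma monomial_isBigO {n : ℕ} (x : ℝ → Fin n → ℝ) (e : Fin n → ℕ) (α : Fin n →₀ ℕ)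
    (hx : ∀ i, (fun t => x t i) =O[nhds (0 : ℝ)] fun t => t ^ e i) (N : ℕ)
    (hN : N ≤ ∑ i, α i * e i) :
    (fun t => ∏ i, x t i ^ α i) =O[nhds (0 : ℝ)] fun t => t ^ N := by
  have h1 : (fun t => ∏ i, x t i ^ α i) =O[nhds (0 : ℝ)]
      fun t => ∏ i : Fin n, (t ^ e i) ^ α i :=
    isBigO_finset_prod Finset.univ (fun i t => x t i ^ α i) (fun i t => (t ^ e i) ^ α i) _
      (fun i _ => (hx i).pow (α i))
  have h2 : (fun t : ℝ => ∏ i : Fin n, (t ^ e i) ^ α i)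
      = fun t : ℝ => t ^ (∑ i, e i * α i) := by
    funext t
    rw [← Finset.prod_pow_eq_pow_sum]
    exact Finset.prod_congr rfl fun i _ => by rw [← pow_mul]
  rw [h2] at h1
  refine h1.trans (pow_isBigO_pow_nhds_zero ?_)
  calc N ≤ ∑ i, α i * e i := hN
    _ = ∑ i, e i * α i := by simp [Nat.mul_comm]

lemma eval_sub_isBigO {n : ℕ} (p : MvPolynomial (Fin n) ℝ) (x y : ℝ → Fin n → ℝ)
    (S : Finset (Fin n)) (e : Fin n → ℕ) (N : ℕ)
    (hx : ∀ i, (fun t => x t i) =O[nhds (0 : ℝ)] fun t => t ^ e i)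
    (hy0 : ∀ i ∈ S, ∀ t, y t i = 0)
    (hxy : ∀ i ∉ S, ∀ t, x t i = y t i)
    (hN : ∀ α ∈ p.support, (∃ i ∈ S, α i ≠ 0) → N ≤ ∑ i, α i * e i) :
    (fun t => MvPolynomial.eval (x t) p - MvPolynomial.eval (y t) p)
      =O[nhds (0 : ℝ)] fun t => t ^ N := by
  classical
  have hrw : (fun t => MvPolynomial.eval (x t) p - MvPolynomial.eval (y t) p)
      = fun t => ∑ α ∈ p.support,
          (coeff α p * ∏ i, x t i ^ α i - coeff α p * ∏ i, y t i ^ α i) := by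
    funext t; rw [eval_eq', eval_eq', ← Finset.sum_sub_distrib]
  rw [hrw]
  apply Asymptotics.IsBigO.fun_sum
  intro α hα
  by_cases hS : ∃ i ∈ S, α i ≠ 0
  · obtain ⟨i0, hi0S, hi0⟩ := hS
    have hy : ∀ t, (∏ i, y t i ^ α i) = 0 := fun t =>
      Finset.prod_eq_zero (Finset.mem_univ i0) (by rw [hy0 i0 hi0S t]; exact zero_pow hi0)
    simp only [hy, mul_zero, sub_zero]
    exact (monomial_isBigO x e α hx N (hN α hα ⟨i0, hi0S, hi0⟩)).const_mul_left _
  · have hprod : ∀ t, (∏ i, x t i ^ α i) = ∏ i, y t i ^ α i := by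
      intro t
      refine Finset.prod_congr rfl fun i _ => ?_
      by_cases hiS : i ∈ S
      · push_neg at hS
        rw [hS i hiS, pow_zero, pow_zero]
      · rw [hxy i hiS]
    simp only [hprod, sub_self]
    exact isBigO_zero _ _

lemma constantCoeff_pderiv {n : ℕ} (s : Fin n) (p : MvPolynomial (Fin n) ℝ) :
    constantCoeff (pderiv s p) = coeff (Finsupp.single s 1) p := by
  classical
  induction p using MvPolynomial.induction_on' with
  | add p q hp hq => simp [map_add, hp, hq]
  | monomial u a =>
    rw [pderiv_monomial, constantCoeff_monomial, coeff_monomial]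
    by_cases h : u = Finsupp.single s 1
    · subst h; simp
    · rw [if_neg h]
      by_cases h2 : u - Finsupp.single s 1 = 0
      · rw [if_pos h2]
        have hle : ∀ j, u j ≤ Finsupp.single s 1 j :=
          fun j => by
            have := Finsupp.le_def.mp (tsub_eq_zero_iff_le.mp h2)
            exact this j
        have hus : u s = 0 := by
          by_contra hus
          apply h
          ext j
          rcases eq_or_ne j s with rfl | hj
          · have h1 : u j ≤ 1 := by simpa using hle j
            rw [Finsupp.single_eq_same]
            omega
          · have h1 : u j ≤ 0 := by
              simpa [Finsupp.single_eq_of_ne' (Ne.symm hj)] using hle j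
            rw [Finsupp.single_eq_of_ne' (Ne.symm hj)]
            omega
        rw [hus]; ring
      · rw [if_neg h2]

lemma fin_sum_eq_one {m : ℕ} (f : Fin m → ℕ) (h : ∑ i, f i = 1) :
    ∃ i0, f i0 = 1 ∧ ∀ k, k ≠ i0 → f k = 0 := by
  have h0 : ∃ i0 ∈ Finset.univ, f i0 ≠ 0 := by
    by_contra hc
    push_neg at hc
    rw [Finset.sum_eq_zero hc] at h
    omega
  obtain ⟨i0, -, hi0⟩ := h0
  have h1 : f i0 + ∑ k ∈ Finset.univ.erase i0, f k = 1 := by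
    rw [Finset.add_sum_erase Finset.univ f (Finset.mem_univ i0)]
    exact h
  have h2 : ∑ k ∈ Finset.univ.erase i0, f k = 0 := by omega
  refine ⟨i0, by omega, fun k hk => ?_⟩
  exact Finset.sum_eq_zero_iff.mp h2 k (Finset.mem_erase.mpr ⟨hk, Finset.mem_univ k⟩)

theorem stmt7 (m : ℕ) (hm : 1 ≤ m) (g : MvPolynomial (Fin (m + 1)) ℝ)
    (h00 : MvPolynomial.eval (Fin.snoc (fun _ : Fin m => (0 : ℝ)) 0) g = 0)
    (hd00 : ∀ i : Fin m,
      MvPolynomial.eval (Fin.snoc (fun _ : Fin m => (0 : ℝ)) 0)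
        (MvPolynomial.pderiv i.castSucc g) = 0)
    (c₀ : ℝ) (hc₀ : c₀ ≠ 0) (d : ℕ) (hd : 1 ≤ d)
    (hlow : (fun t : ℝ =>
        MvPolynomial.eval (Fin.snoc (fun _ : Fin m => (0 : ℝ)) t) g - c₀ * t ^ d)
      =O[nhds 0] fun t : ℝ => t ^ (d + 1))
    (φ : Fin m → ℝ → ℝ) (hφa : ∀ i, AnalyticAt ℝ (φ i) 0) (hφ0 : ∀ i, φ i 0 = 0)
    (heq : ∀ᶠ t in nhds (0 : ℝ), ∀ i : Fin m,
      φ i t +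
        MvPolynomial.eval (Fin.snoc (fun j : Fin m => φ j t) t)
            (MvPolynomial.pderiv i.castSucc g) *
          MvPolynomial.eval (Fin.snoc (fun j : Fin m => φ j t) t) g = 0) :
    ∀ i : Fin m, (φ i) =O[nhds (0 : ℝ)] fun t : ℝ => t ^ (d + 1) := by
  classical
  have hzero : (Fin.snoc (fun _ : Fin m => (0 : ℝ)) 0 : Fin (m + 1) → ℝ) = fun _ => 0 := by
    funext i
    induction i using Fin.lastCases with
    | last => simp
    | cast j => simp
  have hcoeff1 : ∀ i : Fin m, coeff (Finsupp.single i.castSucc 1) g = 0 := by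
    intro i
    have h := hd00 i
    rw [hzero] at h
    rw [← constantCoeff_pderiv, ← MvPolynomial.eval_zero']
    exact h
  -- Step A : φ i = O(t)
  have hφ1 : ∀ i, (φ i) =O[nhds (0 : ℝ)] fun t : ℝ => t ^ 1 := by
    intro i
    have h := (hφa i).differentiableAt.isBigO_sub
    simp only [hφ0 i, sub_zero] at h
    simpa using h
  -- bound on the partial derivative composed with φ
  have hF : ∀ i : Fin m,
      (fun t => MvPolynomial.eval (Fin.snoc (fun j : Fin m => φ j t) t)
        (MvPolynomial.pderiv i.castSucc g)) =O[nhds (0 : ℝ)] fun t : ℝ => t ^ 1 := by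
    intro i
    have h := eval_sub_isBigO (MvPolynomial.pderiv i.castSucc g)
      (fun t => Fin.snoc (fun j : Fin m => φ j t) t) (fun _ _ => 0) Finset.univ
      (fun _ => 1) 1 ?_ (fun _ _ _ => rfl) (fun k hk => absurd (Finset.mem_univ k) hk) ?_
    · have h0 : MvPolynomial.eval (fun _ : Fin (m + 1) => (0 : ℝ))
          (MvPolynomial.pderiv i.castSucc g) = 0 := by
        rw [← hzero]; exact hd00 i
      have h0' : constantCoeff (MvPolynomial.pderiv i.castSucc g) = 0 := by
        rw [← MvPolynomial.eval_zero']; exact h0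
      simpa [h0, h0'] using h
    · intro k
      induction k using Fin.lastCases with
      | last => simpa using isBigO_refl (fun t : ℝ => t) (nhds 0)
      | cast j => simpa using hφ1 j
    · rintro α hα ⟨i1, -, hi1⟩
      calc 1 ≤ α i1 := Nat.one_le_iff_ne_zero.mpr hi1
        _ ≤ ∑ k, α k * 1 := by
            simpa using Finset.single_le_sum (f := fun k => α k)
              (fun k _ => Nat.zero_le _) (Finset.mem_univ i1)
  -- difference of g along φ and along 0
  have hGdiff : ∀ j : ℕ, 1 ≤ j → (∀ i, (φ i) =O[nhds (0 : ℝ)] fun t : ℝ => t ^ j) →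
      (fun t => MvPolynomial.eval (Fin.snoc (fun jj : Fin m => φ jj t) t) g -
        MvPolynomial.eval (Fin.snoc (fun _ : Fin m => (0 : ℝ)) t) g)
        =O[nhds (0 : ℝ)] fun t : ℝ => t ^ (j + 1) := by
    intro j hj hOj
    apply eval_sub_isBigO g (fun t => Fin.snoc (fun jj : Fin m => φ jj t) t)
      (fun t => Fin.snoc (fun _ : Fin m => (0 : ℝ)) t) ({Fin.last m}ᶜ)
      (Fin.snoc (fun _ : Fin m => j) 1) (j + 1)
    · intro k
      induction k using Fin.lastCases with
      | last => simpa using isBigO_refl (fun t : ℝ => t) (nhds 0)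
      | cast i => simpa using hOj i
    · intro k hk t
      have hk' : k ≠ Fin.last m := by simpa using hk
      obtain ⟨i, rfl⟩ := Fin.exists_castSucc_eq.mpr hk'
      simp
    · intro k hk t
      have hk' : k = Fin.last m := by simpa using hk
      subst hk'
      simp
    · rintro α hα ⟨i1, hi1S, hi1⟩
      have hi1' : i1 ≠ Fin.last m := by simpa using hi1S
      obtain ⟨i1, rfl⟩ := Fin.exists_castSucc_eq.mpr hi1'
      have hsum : ∑ k, α k * (Fin.snoc (fun _ : Fin m => j) 1 : Fin (m + 1) → ℕ) k
          = (∑ i : Fin m, α i.castSucc) * j + α (Fin.last m) := by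
        rw [Fin.sum_univ_castSucc]
        simp [Finset.sum_mul]
      rw [hsum]
      have hs1 : 1 ≤ ∑ i : Fin m, α i.castSucc :=
        le_trans (Nat.one_le_iff_ne_zero.mpr hi1)
          (Finset.single_le_sum (f := fun i : Fin m => α i.castSucc)
            (fun k _ => Nat.zero_le _) (Finset.mem_univ i1))
      rcases Nat.lt_or_ge (∑ i : Fin m, α i.castSucc) 2 with hs2 | hs2
      · rcases Nat.eq_zero_or_pos (α (Fin.last m)) with hlast | hlast
        · -- contradiction : α is a single x-monomial, whose coefficient vanishes
          exfalso
          have hone : ∑ i : Fin m, α i.castSucc = 1 := by omega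
          obtain ⟨i0, hone0, hrest0⟩ := fin_sum_eq_one (fun i : Fin m => α i.castSucc) hone
          have hone0' : α i0.castSucc = 1 := hone0
          have hrest0' : ∀ k : Fin m, k ≠ i0 → α k.castSucc = 0 := fun k hk => hrest0 k hk
          have hαeq : α = Finsupp.single (Fin.castSucc i0) 1 := by
            ext k
            induction k using Fin.lastCases with
            | last =>
              rw [hlast, Finsupp.single_eq_of_ne' (Fin.castSucc_lt_last i0).ne]
            | cast k =>
              rcases eq_or_ne k i0 with rfl | hne
              · rw [hone0', Finsupp.single_eq_same]
              · rw [hrest0' k hne,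
                  Finsupp.single_eq_of_ne' (by simpa [Fin.castSucc_inj] using Ne.symm hne)]
          have hmem := MvPolynomial.mem_support_iff.mp hα
          rw [hαeq] at hmem
          exact hmem (hcoeff1 i0)
        · -- sum = 1, α last ≥ 1
          have hmul : 1 * j ≤ (∑ i : Fin m, α i.castSucc) * j :=
            Nat.mul_le_mul hs1 (Nat.le_refl j)
          omega
      · -- sum ≥ 2
        have hmul : 2 * j ≤ (∑ i : Fin m, α i.castSucc) * j :=
          Nat.mul_le_mul hs2 (Nat.le_refl j)
        omega
  -- bound on g along φ
  have hG : ∀ j : ℕ, 1 ≤ j → (∀ i, (φ i) =O[nhds (0 : ℝ)] fun t : ℝ => t ^ j) →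
      (fun t => MvPolynomial.eval (Fin.snoc (fun jj : Fin m => φ jj t) t) g)
        =O[nhds (0 : ℝ)] fun t : ℝ => t ^ (min (j + 1) d) := by
    intro j hj hOj
    have e1 := (hGdiff j hj hOj).trans
      (pow_isBigO_pow_nhds_zero (min_le_left (j + 1) d))
    have e2 := hlow.trans (pow_isBigO_pow_nhds_zero
      (by omega : min (j + 1) d ≤ d + 1))
    have e3 : (fun t : ℝ => c₀ * t ^ d) =O[nhds (0 : ℝ)] fun t : ℝ => t ^ (min (j + 1) d) :=
      ((isBigO_refl (fun t : ℝ => t ^ d) (nhds 0)).const_mul_left c₀).trans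
        (pow_isBigO_pow_nhds_zero (min_le_right (j + 1) d))
    have hsum := (e1.add e2).add e3
    have hfun : (fun t : ℝ =>
        (MvPolynomial.eval (Fin.snoc (fun jj : Fin m => φ jj t) t) g -
          MvPolynomial.eval (Fin.snoc (fun _ : Fin m => (0 : ℝ)) t) g) +
        (MvPolynomial.eval (Fin.snoc (fun _ : Fin m => (0 : ℝ)) t) g - c₀ * t ^ d) +
        c₀ * t ^ d)
        = fun t => MvPolynomial.eval (Fin.snoc (fun jj : Fin m => φ jj t) t) g := by
      funext t; ring
    rwa [hfun] at hsum
  -- bootstrap step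
  have stepB : ∀ j : ℕ, 1 ≤ j → j ≤ d →
      (∀ i, (φ i) =O[nhds (0 : ℝ)] fun t : ℝ => t ^ j) →
      ∀ i, (φ i) =O[nhds (0 : ℝ)] fun t : ℝ => t ^ (j + 1) := by
    intro j hj1 hjd hOj i
    have hmul : (fun t => -(MvPolynomial.eval (Fin.snoc (fun jj : Fin m => φ jj t) t)
          (MvPolynomial.pderiv i.castSucc g) *
        MvPolynomial.eval (Fin.snoc (fun jj : Fin m => φ jj t) t) g))
        =O[nhds (0 : ℝ)] fun t : ℝ => t ^ (j + 1) := by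
      have h := ((hF i).mul (hG j hj1 hOj)).neg_left
      refine h.trans ?_
      have hrw : (fun t : ℝ => t ^ 1 * t ^ (min (j + 1) d))
          = fun t : ℝ => t ^ (1 + min (j + 1) d) := by
        funext t; rw [pow_add]
      rw [hrw]
      exact pow_isBigO_pow_nhds_zero (by omega)
    have hEq : (fun t => -(MvPolynomial.eval (Fin.snoc (fun jj : Fin m => φ jj t) t)
          (MvPolynomial.pderiv i.castSucc g) *
        MvPolynomial.eval (Fin.snoc (fun jj : Fin m => φ jj t) t) g))
        =ᶠ[nhds (0 : ℝ)] φ i :=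
      heq.mono fun t ht => by
        have h' := ht i
        show -(MvPolynomial.eval (Fin.snoc (fun jj : Fin m => φ jj t) t)
            (MvPolynomial.pderiv i.castSucc g) *
          MvPolynomial.eval (Fin.snoc (fun jj : Fin m => φ jj t) t) g) = φ i t
        linarith
    exact hmul.congr' hEq EventuallyEq.rfl
  -- main induction
  have main : ∀ j : ℕ, j ≤ d + 1 → ∀ i, (φ i) =O[nhds (0 : ℝ)] fun t : ℝ => t ^ j := by
    intro j
    induction j with
    | zero =>
      intro _ i
      simp only [pow_zero]
      exact ((hφa i).continuousAt.tendsto).isBigO_one ℝ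
    | succ j ih =>
      intro hjd i
      rcases Nat.eq_zero_or_pos j with rfl | hj
      · simpa using hφ1 i
      · exact stepB j hj (by omega) (fun i' => ih (by omega) i') i
  exact fun i => main (d + 1) le_rfl i
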